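/- Let P be a monoid with a finite generating set S ⊆ P \ {e}, and let N : P → [1,∞) be a multiplicative map with η := min{N(s) : s ∈ S} > 1. Then for every β > (log |S|)/(log η), the sum ∑_{p ∈ P} N(p)^{-β} converges. -/

import Mathlib

theorem aux_len_le {P : Type*} [Monoid P] (S : Finset P)
    (N : P →* ℝ) (η : ℝ) (hη0 : 0 < η)
    (hηS : ∀ s ∈ S, η ≤ N s) :
    ∀ l : List ↥S, η ^ l.length ≤ N ((l.map Subtype.val).prod) := by
  intro l
  induction l with
  | nil => simp
  | cons a t ih =>
    simp only [List.map_cons, List.prod_cons, List.length_cons, map_mul, pow_succ']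
    exact mul_le_mul (hηS a a.2) ih (pow_nonneg hη0.le _)
      (le_trans hη0.le (hηS a a.2))

/-- if `P` is generated by a finite set `S` of non-identity elements and
`η = min{N(s) : s ∈ S} > 1`, then `∑_{p∈P} N(p)^{-β}` converges for every
`β > log|S| / log η`. -/
theorem stmt6 {P : Type*} [Monoid P] (S : Finset P) (hS : ∀ s ∈ S, s ≠ 1)
    (hgen : Submonoid.closure (S : Set P) = ⊤)
    (N : P →* ℝ) (hN : ∀ p, 1 ≤ N p) (η : ℝ) (hη : 1 < η)
    (hηS : ∀ s ∈ S, η ≤ N s) (β : ℝ)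
    (hβ : Real.log (S.card : ℝ) / Real.log η < β) :
    Summable fun p : P => (N p) ^ (-β) := by
  classical
  have hη0 : (0:ℝ) < η := lt_trans one_pos hη
  have hlogη : 0 < Real.log η := Real.log_pos hη
  have hlogcard : 0 ≤ Real.log (S.card : ℝ) := by
    rcases Nat.eq_zero_or_pos S.card with h | h
    · simp [h]
    · exact Real.log_nonneg (by exact_mod_cast h)
  have hβ0 : 0 < β := lt_of_le_of_lt (div_nonneg hlogcard hlogη.le) hβ
  set r : ℝ := η ^ (-β) with hr
  have hr0 : 0 ≤ r := Real.rpow_nonneg hη0.le _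
  have hcr : (S.card : ℝ) * r < 1 := by
    rcases Nat.eq_zero_or_pos S.card with h | h
    · simp [h]
    · have hcpos : (0:ℝ) < S.card := by exact_mod_cast h
      have hlog : Real.log ((S.card : ℝ) * r) < 0 := by
        rw [Real.log_mul (ne_of_gt hcpos) (ne_of_gt (Real.rpow_pos_of_pos hη0 _)),
          Real.log_rpow hη0]
        have : Real.log (S.card : ℝ) < β * Real.log η :=
          (div_lt_iff₀ hlogη).mp hβ
        linarith
      have := (Real.log_neg_iff (mul_pos hcpos (Real.rpow_pos_of_pos hη0 _))).mp hlog
      exact this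
  -- summability over sigma of tuples
  have hsig : Summable (fun x : (n : ℕ) × (Fin n → ↥S) => r ^ x.1) := by
    rw [summable_sigma_of_nonneg (fun x => pow_nonneg hr0 _)]
    constructor
    · intro n
      exact Summable.of_finite
    · have heq : (fun n : ℕ => ∑' _ : Fin n → ↥S, r ^ n)
          = fun n : ℕ => ((S.card : ℝ) * r) ^ n := by
        funext n
        rw [tsum_const]
        simp [Nat.card_eq_fintype_card, Fintype.card_fun, Fintype.card_coe,
          mul_pow, nsmul_eq_mul]
      rw [heq]
      exact summable_geometric_of_lt_one (mul_nonneg (by positivity) hr0) hcr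
  have hlist : Summable (fun l : List ↥S => r ^ l.length) := by
    have := hsig.comp_injective (List.equivSigmaTuple (α := ↥S)).injective
    simpa [Function.comp_def, List.equivSigmaTuple] using this
  -- comparison
  have hg : Summable (fun l : List ↥S => (N ((l.map Subtype.val).prod)) ^ (-β)) := by
    refine Summable.of_nonneg_of_le
      (fun l => Real.rpow_nonneg (le_trans zero_le_one (hN _)) _)
      (fun l => ?_) hlist
    have h1 := aux_len_le S N η hη0 hηS l
    have h2 : (N ((l.map Subtype.val).prod)) ^ (-β) ≤ (η ^ l.length) ^ (-β) :=
      Real.rpow_le_rpow_of_nonpos (pow_pos hη0 _) h1 (neg_nonpos.mpr hβ0.le)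
    calc (N ((l.map Subtype.val).prod)) ^ (-β) ≤ (η ^ l.length) ^ (-β) := h2
      _ = r ^ l.length := by
        rw [← Real.rpow_natCast η l.length, ← Real.rpow_mul hη0.le, mul_comm,
          Real.rpow_mul hη0.le, Real.rpow_natCast]
  -- surjectivity onto P
  have hsurj : Function.Surjective (fun l : List ↥S => (l.map Subtype.val).prod) := by
    intro p
    have hp : p ∈ Submonoid.closure (S : Set P) := by rw [hgen]; trivial
    obtain ⟨l, hl, hlp⟩ := Submonoid.exists_list_of_mem_closure hp
    refine ⟨l.pmap (fun x hx => (⟨x, hx⟩ : ↥S)) hl, ?_⟩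
    simpa [List.map_pmap, List.pmap_eq_map] using hlp
  have key : (fun p : P => (N p) ^ (-β))
      = (fun l : List ↥S => (N ((l.map Subtype.val).prod)) ^ (-β))
        ∘ (Function.surjInv hsurj) := by
    funext p
    have := Function.surjInv_eq hsurj p
    simp only [Function.comp_apply]
    rw [this]
  rw [key]
  exact hg.comp_injective (Function.injective_surjInv hsurj)
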